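/- Let D be a category with finite products and finite coproducts, equipped with a natural family of isomorphisms ψ_{X,Y,Z} : X×Y + X×Z ≅ X×(Y+Z). Then D is distributive: the canonical map δ_{X,Y,Z} : X×Y + X×Z → X×(Y+Z) is an isomorphism for all X, Y, Z. -/

import Mathlib

open CategoryTheory CategoryTheory.Limits

namespace Stmt8Aux

variable {D : Type*} [Category D] [HasFiniteProducts D] [HasFiniteCoproducts D]

set_option linter.unusedSectionVars false

attribute [local simp] coprod.inl_desc coprod.inr_desc prod.lift_fst prod.lift_snd coprod.inl_desc_assoc coprod.inr_desc_assoc prod.lift_fst_assoc prod.lift_snd_assoc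

noncomputable def rUnit (Y : D) : Y ⨿ (⊥_ D) ≅ Y where
  hom := coprod.desc (𝟙 Y) (initial.to Y)
  inv := coprod.inl
  hom_inv_id := by
    apply coprod.hom_ext
    · simp
    · exact initial.hom_ext _ _
  inv_hom_id := by simp

noncomputable def lUnit (Z : D) : (⊥_ D) ⨿ Z ≅ Z where
  hom := coprod.desc (initial.to Z) (𝟙 Z)
  inv := coprod.inr
  hom_inv_id := by
    apply coprod.hom_ext
    · exact initial.hom_ext _ _
    · simp
  inv_hom_id := by simp

lemma rUnit_bot_eq_lUnit_bot : (rUnit (⊥_ D)).hom = (lUnit (⊥_ D)).hom := by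
  apply coprod.hom_ext <;> exact initial.hom_ext _ _

lemma rUnit_nat {Y Y' : D} (g : Y ⟶ Y') :
    coprod.map g (𝟙 (⊥_ D)) ≫ (rUnit Y').hom = (rUnit Y).hom ≫ g := by
  apply coprod.hom_ext
  · simp [rUnit]
  · exact initial.hom_ext _ _

lemma lUnit_nat {Z Z' : D} (h : Z ⟶ Z') :
    coprod.map (𝟙 (⊥_ D)) h ≫ (lUnit Z').hom = (lUnit Z).hom ≫ h := by
  apply coprod.hom_ext
  · exact initial.hom_ext _ _
  · simp [lUnit]

lemma rUnit_inl {Y Z : D} :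
    (rUnit Y).hom ≫ (coprod.inl : Y ⟶ Y ⨿ Z) = coprod.map (𝟙 Y) (initial.to Z) := by
  apply coprod.hom_ext
  · simp [rUnit]
  · exact initial.hom_ext _ _

lemma lUnit_inr {Y Z : D} :
    (lUnit Z).hom ≫ (coprod.inr : Z ⟶ Y ⨿ Z) = coprod.map (initial.to Y) (𝟙 Z) := by
  apply coprod.hom_ext
  · exact initial.hom_ext _ _
  · simp [lUnit]

section
variable (ψ : ∀ X Y Z : D, (X ⨯ Y) ⨿ (X ⨯ Z) ≅ X ⨯ (Y ⨿ Z))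

noncomputable def ahat (X Y : D) : X ⨯ Y ⟶ X ⨯ Y :=
  coprod.inl ≫ (ψ X Y (⊥_ D)).hom ≫ prod.map (𝟙 X) (rUnit Y).hom

noncomputable def bhat (X Z : D) : X ⨯ Z ⟶ X ⨯ Z :=
  coprod.inr ≫ (ψ X (⊥_ D) Z).hom ≫ prod.map (𝟙 X) (lUnit Z).hom

noncomputable def alp (X Y : D) : (X ⨯ Y) ⨿ (X ⨯ ⊥_ D) ≅ X ⨯ Y :=
  ψ X Y (⊥_ D) ≪≫ prod.mapIso (Iso.refl X) (rUnit Y)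

noncomputable def bet (X Z : D) : (X ⨯ ⊥_ D) ⨿ (X ⨯ Z) ≅ X ⨯ Z :=
  ψ X (⊥_ D) Z ≪≫ prod.mapIso (Iso.refl X) (lUnit Z)

lemma inl_alp (X Y : D) : coprod.inl ≫ (alp ψ X Y).hom = ahat ψ X Y := by
  simp [alp, ahat, prod.mapIso]

lemma inr_bet (X Z : D) : coprod.inr ≫ (bet ψ X Z).hom = bhat ψ X Z := by
  simp [bet, bhat, prod.mapIso]

lemma inr_alp_bot (X : D) : coprod.inr ≫ (alp ψ X (⊥_ D)).hom = bhat ψ X (⊥_ D) := by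
  simp [alp, bhat, prod.mapIso, rUnit_bot_eq_lUnit_bot]

variable (nat : ∀ {X X' Y Y' Z Z' : D} (f : X ⟶ X') (g : Y ⟶ Y') (h : Z ⟶ Z'),
      coprod.map (prod.map f g) (prod.map f h) ≫ (ψ X' Y' Z').hom =
        (ψ X Y Z).hom ≫ prod.map f (coprod.map g h))

include nat

lemma ahat_nat {X X' Y Y' : D} (f : X ⟶ X') (g : Y ⟶ Y') :
    prod.map f g ≫ ahat ψ X' Y' = ahat ψ X Y ≫ prod.map f g := by
  rw [ahat, ahat]
  slice_lhs 1 2 => rw [← coprod.inl_map (prod.map f g) (prod.map f (𝟙 (⊥_ D)))]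
  slice_lhs 2 3 => rw [nat f g (𝟙 (⊥_ D))]
  slice_lhs 3 4 => rw [prod.map_map]
  rw [rUnit_nat g]
  slice_rhs 3 4 => rw [prod.map_map]
  simp

lemma bhat_nat {X X' Z Z' : D} (f : X ⟶ X') (h : Z ⟶ Z') :
    prod.map f h ≫ bhat ψ X' Z' = bhat ψ X Z ≫ prod.map f h := by
  rw [bhat, bhat]
  slice_lhs 1 2 => rw [← coprod.inr_map (prod.map f (𝟙 (⊥_ D))) (prod.map f h)]
  slice_lhs 2 3 => rw [nat f (𝟙 (⊥_ D)) h]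
  slice_lhs 3 4 => rw [prod.map_map]
  rw [lUnit_nat h]
  slice_rhs 3 4 => rw [prod.map_map]
  simp

lemma a_factor (X Y Z : D) :
    coprod.inl ≫ (ψ X Y Z).hom = ahat ψ X Y ≫ prod.map (𝟙 X) coprod.inl := by
  have h := nat (𝟙 X) (𝟙 Y) (initial.to Z)
  calc coprod.inl ≫ (ψ X Y Z).hom
      = coprod.inl ≫ coprod.map (prod.map (𝟙 X) (𝟙 Y)) (prod.map (𝟙 X) (initial.to Z)) ≫
          (ψ X Y Z).hom := by simp
    _ = coprod.inl ≫ (ψ X Y (⊥_ D)).hom ≫ prod.map (𝟙 X) (coprod.map (𝟙 Y) (initial.to Z)) := by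
        rw [h]
    _ = ahat ψ X Y ≫ prod.map (𝟙 X) coprod.inl := by
        rw [ahat]
        simp only [Category.assoc, prod.map_map, Category.id_comp]
        rw [rUnit_inl]

lemma b_factor (X Y Z : D) :
    coprod.inr ≫ (ψ X Y Z).hom = bhat ψ X Z ≫ prod.map (𝟙 X) coprod.inr := by
  have h := nat (𝟙 X) (initial.to Y) (𝟙 Z)
  calc coprod.inr ≫ (ψ X Y Z).hom
      = coprod.inr ≫ coprod.map (prod.map (𝟙 X) (initial.to Y)) (prod.map (𝟙 X) (𝟙 Z)) ≫
          (ψ X Y Z).hom := by simp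
    _ = coprod.inr ≫ (ψ X (⊥_ D) Z).hom ≫ prod.map (𝟙 X) (coprod.map (initial.to Y) (𝟙 Z)) := by
        rw [h]
    _ = bhat ψ X Z ≫ prod.map (𝟙 X) coprod.inr := by
        rw [bhat]
        simp only [Category.assoc, prod.map_map, Category.id_comp]
        rw [lUnit_inr]

lemma psi_eq (X Y Z : D) :
    (ψ X Y Z).hom = coprod.map (ahat ψ X Y) (bhat ψ X Z) ≫
      coprod.desc (prod.map (𝟙 X) coprod.inl) (prod.map (𝟙 X) coprod.inr) := by
  apply coprod.hom_ext
  · rw [← Category.assoc, coprod.inl_map, a_factor ψ nat]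
    simp
  · rw [← Category.assoc, coprod.inr_map, b_factor ψ nat]
    simp

end

section
variable (ψ : ∀ X Y Z : D, (X ⨯ Y) ⨿ (X ⨯ Z) ≅ X ⨯ (Y ⨿ Z))

noncomputable def mu (X : D) : X ⟶ X :=
  prod.lift (𝟙 X) (terminal.from X) ≫ ahat ψ X (⊤_ D) ≫ prod.fst

noncomputable def mu' (X : D) : X ⟶ X :=
  prod.lift (𝟙 X) (terminal.from X) ≫ bhat ψ X (⊤_ D) ≫ prod.fst

lemma fst_mu (X : D) : prod.fst ≫ mu ψ X = ahat ψ X (⊤_ D) ≫ prod.fst := by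
  have hid : (prod.fst ≫ prod.lift (𝟙 X) (terminal.from X) : X ⨯ ⊤_ D ⟶ X ⨯ ⊤_ D) = 𝟙 _ := by
    apply Limits.prod.hom_ext
    · simp
    · exact terminal.hom_ext _ _
  rw [mu]
  slice_lhs 1 2 => rw [hid]
  simp

lemma fst_mu' (X : D) : prod.fst ≫ mu' ψ X = bhat ψ X (⊤_ D) ≫ prod.fst := by
  have hid : (prod.fst ≫ prod.lift (𝟙 X) (terminal.from X) : X ⨯ ⊤_ D ⟶ X ⨯ ⊤_ D) = 𝟙 _ := by
    apply Limits.prod.hom_ext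
    · simp
    · exact terminal.hom_ext _ _
  rw [mu']
  slice_lhs 1 2 => rw [hid]
  simp

variable (nat : ∀ {X X' Y Y' Z Z' : D} (f : X ⟶ X') (g : Y ⟶ Y') (h : Z ⟶ Z'),
      coprod.map (prod.map f g) (prod.map f h) ≫ (ψ X' Y' Z').hom =
        (ψ X Y Z).hom ≫ prod.map f (coprod.map g h))

include nat

lemma mu_nat {X X' : D} (f : X ⟶ X') : f ≫ mu ψ X' = mu ψ X ≫ f := by
  have k1 : f ≫ prod.lift (𝟙 X') (terminal.from X')
      = prod.lift (𝟙 X) (terminal.from X) ≫ prod.map f (𝟙 (⊤_ D)) := by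
    apply Limits.prod.hom_ext
    · simp
    · exact terminal.hom_ext _ _
  rw [mu, mu]
  slice_lhs 1 2 => rw [k1]
  slice_lhs 2 3 => rw [ahat_nat ψ nat f (𝟙 (⊤_ D))]
  simp

lemma mu'_nat {X X' : D} (f : X ⟶ X') : f ≫ mu' ψ X' = mu' ψ X ≫ f := by
  have k1 : f ≫ prod.lift (𝟙 X') (terminal.from X')
      = prod.lift (𝟙 X) (terminal.from X) ≫ prod.map f (𝟙 (⊤_ D)) := by
    apply Limits.prod.hom_ext
    · simp
    · exact terminal.hom_ext _ _
  rw [mu', mu']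
  slice_lhs 1 2 => rw [k1]
  slice_lhs 2 3 => rw [bhat_nat ψ nat f (𝟙 (⊤_ D))]
  simp

omit nat in
lemma top_bot_hom_ext {W : D} (u v : (⊤_ D) ⨯ (⊥_ D) ⟶ W) : u = v := by
  have h : (prod.snd ≫ prod.lift (terminal.from (⊥_ D)) (𝟙 (⊥_ D)) :
      (⊤_ D) ⨯ (⊥_ D) ⟶ (⊤_ D) ⨯ (⊥_ D)) = 𝟙 _ := by
    apply Limits.prod.hom_ext
    · exact terminal.hom_ext _ _
    · simp
  have hu : u = prod.snd ≫ (prod.lift (terminal.from (⊥_ D)) (𝟙 (⊥_ D)) ≫ u) := by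
    rw [← Category.assoc, h, Category.id_comp]
  have hv : v = prod.snd ≫ (prod.lift (terminal.from (⊥_ D)) (𝟙 (⊥_ D)) ≫ v) := by
    rw [← Category.assoc, h, Category.id_comp]
  rw [hu, hv, initial.hom_ext (prod.lift (terminal.from (⊥_ D)) (𝟙 (⊥_ D)) ≫ u)
    (prod.lift (terminal.from (⊥_ D)) (𝟙 (⊥_ D)) ≫ v)]

lemma mu_prod_top (X : D) : mu ψ (X ⨯ ⊤_ D) = ahat ψ X (⊤_ D) := by
  apply Limits.prod.hom_ext
  · rw [← mu_nat ψ nat prod.fst, fst_mu]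
  · exact terminal.hom_ext _ _

lemma mu'_prod_top (X : D) : mu' ψ (X ⨯ ⊤_ D) = bhat ψ X (⊤_ D) := by
  apply Limits.prod.hom_ext
  · rw [← mu'_nat ψ nat prod.fst, fst_mu']
  · exact terminal.hom_ext _ _

omit nat in
lemma map_bang_fst (X : D) :
    (prod.map (𝟙 X) (initial.to (⊤_ D)) : X ⨯ ⊥_ D ⟶ X ⨯ ⊤_ D) ≫ prod.fst = prod.fst := by simp

lemma ahat_bot_fst (X : D) : ahat ψ X (⊥_ D) ≫ prod.fst = prod.fst ≫ mu ψ X := by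
  calc ahat ψ X (⊥_ D) ≫ prod.fst
      = ahat ψ X (⊥_ D) ≫ prod.map (𝟙 X) (initial.to (⊤_ D)) ≫ prod.fst := by
        rw [map_bang_fst]
    _ = (prod.map (𝟙 X) (initial.to (⊤_ D)) ≫ ahat ψ X (⊤_ D)) ≫ prod.fst := by
        rw [← Category.assoc, ← ahat_nat ψ nat (𝟙 X) (initial.to (⊤_ D))]
    _ = prod.map (𝟙 X) (initial.to (⊤_ D)) ≫ prod.fst ≫ mu ψ X := by
        rw [Category.assoc, fst_mu]
    _ = prod.fst ≫ mu ψ X := by rw [← Category.assoc, map_bang_fst]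

lemma bhat_bot_fst (X : D) : bhat ψ X (⊥_ D) ≫ prod.fst = prod.fst ≫ mu' ψ X := by
  calc bhat ψ X (⊥_ D) ≫ prod.fst
      = bhat ψ X (⊥_ D) ≫ prod.map (𝟙 X) (initial.to (⊤_ D)) ≫ prod.fst := by
        rw [map_bang_fst]
    _ = (prod.map (𝟙 X) (initial.to (⊤_ D)) ≫ bhat ψ X (⊤_ D)) ≫ prod.fst := by
        rw [← Category.assoc, ← bhat_nat ψ nat (𝟙 X) (initial.to (⊤_ D))]
    _ = prod.map (𝟙 X) (initial.to (⊤_ D)) ≫ prod.fst ≫ mu' ψ X := by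
        rw [Category.assoc, fst_mu']
    _ = prod.fst ≫ mu' ψ X := by rw [← Category.assoc, map_bang_fst]

lemma mu_prod_bot (X : D) : mu ψ (X ⨯ ⊥_ D) = ahat ψ X (⊥_ D) := by
  apply Limits.prod.hom_ext
  · rw [← mu_nat ψ nat prod.fst, ahat_bot_fst ψ nat]
  · have h1 : mu ψ (X ⨯ ⊥_ D) ≫ prod.snd = prod.snd := by
      rw [← mu_nat ψ nat prod.snd]
      have h0 : mu ψ (⊥_ D) = 𝟙 _ := initial.hom_ext _ _
      rw [h0, Category.comp_id]
    rw [h1]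
    symm
    calc ahat ψ X (⊥_ D) ≫ prod.snd
        = ahat ψ X (⊥_ D) ≫ prod.map (terminal.from X) (𝟙 (⊥_ D)) ≫ prod.snd := by simp
      _ = (prod.map (terminal.from X) (𝟙 (⊥_ D)) ≫ ahat ψ (⊤_ D) (⊥_ D)) ≫ prod.snd := by
          rw [← Category.assoc, ← ahat_nat ψ nat (terminal.from X) (𝟙 (⊥_ D))]
      _ = prod.map (terminal.from X) (𝟙 (⊥_ D)) ≫ prod.snd := by
          rw [Category.assoc, top_bot_hom_ext (ahat ψ (⊤_ D) (⊥_ D) ≫ prod.snd) prod.snd]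
      _ = prod.snd := by simp

lemma mu'_prod_bot (X : D) : mu' ψ (X ⨯ ⊥_ D) = bhat ψ X (⊥_ D) := by
  apply Limits.prod.hom_ext
  · rw [← mu'_nat ψ nat prod.fst, bhat_bot_fst ψ nat]
  · have h1 : mu' ψ (X ⨯ ⊥_ D) ≫ prod.snd = prod.snd := by
      rw [← mu'_nat ψ nat prod.snd]
      have h0 : mu' ψ (⊥_ D) = 𝟙 _ := initial.hom_ext _ _
      rw [h0, Category.comp_id]
    rw [h1]
    symm
    calc bhat ψ X (⊥_ D) ≫ prod.snd
        = bhat ψ X (⊥_ D) ≫ prod.map (terminal.from X) (𝟙 (⊥_ D)) ≫ prod.snd := by simp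
      _ = (prod.map (terminal.from X) (𝟙 (⊥_ D)) ≫ bhat ψ (⊤_ D) (⊥_ D)) ≫ prod.snd := by
          rw [← Category.assoc, ← bhat_nat ψ nat (terminal.from X) (𝟙 (⊥_ D))]
      _ = prod.map (terminal.from X) (𝟙 (⊥_ D)) ≫ prod.snd := by
          rw [Category.assoc, top_bot_hom_ext (bhat ψ (⊤_ D) (⊥_ D) ≫ prod.snd) prod.snd]
      _ = prod.snd := by simp

lemma factor_mu {X W : D} (u : X ⨯ (⊥_ D) ⟶ W) :
    u = ((alp ψ X (⊥_ D)).inv ≫ coprod.desc u u) ≫ mu ψ W := by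
  have h : mu ψ (X ⨯ (⊥_ D)) ≫ (alp ψ X (⊥_ D)).inv = coprod.inl := by
    rw [mu_prod_bot ψ nat, ← inl_alp ψ]
    simp
  rw [mu_nat ψ nat ((alp ψ X (⊥_ D)).inv ≫ coprod.desc u u), ← Category.assoc, h]
  simp

lemma factor_mu' {X W : D} (u : X ⨯ (⊥_ D) ⟶ W) :
    u = ((alp ψ X (⊥_ D)).inv ≫ coprod.desc u u) ≫ mu' ψ W := by
  have h : mu' ψ (X ⨯ (⊥_ D)) ≫ (alp ψ X (⊥_ D)).inv = coprod.inr := by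
    rw [mu'_prod_bot ψ nat, ← inr_alp_bot ψ]
    simp
  rw [mu'_nat ψ nat ((alp ψ X (⊥_ D)).inv ≫ coprod.desc u u), ← Category.assoc, h]
  simp

lemma ahat_top_iso (X : D) : IsIso (ahat ψ X (⊤_ D)) := by
  set c := (coprod.inr ≫ (alp ψ X (⊤_ D)).hom : X ⨯ (⊥_ D) ⟶ X ⨯ (⊤_ D)) with hc
  obtain ⟨t, ht⟩ : ∃ t, c = t ≫ ahat ψ X (⊤_ D) := by
    refine ⟨(alp ψ X (⊥_ D)).inv ≫ coprod.desc c c, ?_⟩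
    rw [← mu_prod_top ψ nat]
    exact factor_mu ψ nat c
  refine ⟨⟨(alp ψ X (⊤_ D)).inv ≫ coprod.desc (𝟙 _) t, ?_, ?_⟩⟩
  · have h : ahat ψ X (⊤_ D) ≫ (alp ψ X (⊤_ D)).inv = coprod.inl := by
      rw [← inl_alp ψ]
      simp
    rw [← Category.assoc, h]
    simp
  · have hdesc : coprod.desc (coprod.inl ≫ (alp ψ X (⊤_ D)).hom)
        (coprod.inr ≫ (alp ψ X (⊤_ D)).hom) = (alp ψ X (⊤_ D)).hom := by
      apply coprod.hom_ext <;> simp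
    rw [Category.assoc, coprod.desc_comp, Category.id_comp, ← ht, hc, ← inl_alp ψ, hdesc]
    simp

lemma bhat_top_iso (X : D) : IsIso (bhat ψ X (⊤_ D)) := by
  set c := (coprod.inl ≫ (bet ψ X (⊤_ D)).hom : X ⨯ (⊥_ D) ⟶ X ⨯ (⊤_ D)) with hc
  obtain ⟨t, ht⟩ : ∃ t, c = t ≫ bhat ψ X (⊤_ D) := by
    refine ⟨(alp ψ X (⊥_ D)).inv ≫ coprod.desc c c, ?_⟩
    rw [← mu'_prod_top ψ nat]
    exact factor_mu' ψ nat c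
  refine ⟨⟨(bet ψ X (⊤_ D)).inv ≫ coprod.desc t (𝟙 _), ?_, ?_⟩⟩
  · have h : bhat ψ X (⊤_ D) ≫ (bet ψ X (⊤_ D)).inv = coprod.inr := by
      rw [← inr_bet ψ]
      simp
    rw [← Category.assoc, h]
    simp
  · have hdesc : coprod.desc (coprod.inl ≫ (bet ψ X (⊤_ D)).hom)
        (coprod.inr ≫ (bet ψ X (⊤_ D)).hom) = (bet ψ X (⊤_ D)).hom := by
      apply coprod.hom_ext <;> simp
    rw [Category.assoc, coprod.desc_comp, Category.id_comp, ← ht, hc, ← inr_bet ψ, hdesc]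
    simp

lemma mu_iso (X : D) : IsIso (mu ψ X) := by
  haveI h1 : IsIso (ahat ψ X (⊤_ D)) := ahat_top_iso ψ nat X
  haveI h2 : IsIso (prod.lift (𝟙 X) (terminal.from X)) := by
    refine ⟨⟨prod.fst, by simp, ?_⟩⟩
    apply Limits.prod.hom_ext
    · simp
    · exact terminal.hom_ext _ _
  haveI h3 : IsIso (prod.fst : X ⨯ ⊤_ D ⟶ X) := by
    refine ⟨⟨prod.lift (𝟙 X) (terminal.from X), ?_, by simp⟩⟩
    apply Limits.prod.hom_ext
    · simp
    · exact terminal.hom_ext _ _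
  rw [mu]
  infer_instance

lemma mu'_iso (X : D) : IsIso (mu' ψ X) := by
  haveI h1 : IsIso (bhat ψ X (⊤_ D)) := bhat_top_iso ψ nat X
  haveI h2 : IsIso (prod.lift (𝟙 X) (terminal.from X)) := by
    refine ⟨⟨prod.fst, by simp, ?_⟩⟩
    apply Limits.prod.hom_ext
    · simp
    · exact terminal.hom_ext _ _
  haveI h3 : IsIso (prod.fst : X ⨯ ⊤_ D ⟶ X) := by
    refine ⟨⟨prod.lift (𝟙 X) (terminal.from X), ?_, by simp⟩⟩
    apply Limits.prod.hom_ext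
    · simp
    · exact terminal.hom_ext _ _
  rw [mu']
  infer_instance

lemma prod_bot_hom_ext {X W : D} (u v : X ⨯ (⊥_ D) ⟶ W) : u = v := by
  haveI hmu : IsIso (mu ψ (X ⨯ (⊥_ D))) := mu_iso ψ nat (X ⨯ (⊥_ D))
  haveI hmu' : IsIso (mu' ψ (X ⨯ (⊥_ D))) := mu'_iso ψ nat (X ⨯ (⊥_ D))
  have hinl : (coprod.inl : X ⨯ (⊥_ D) ⟶ (X ⨯ (⊥_ D)) ⨿ (X ⨯ (⊥_ D)))
      = mu ψ (X ⨯ (⊥_ D)) ≫ (alp ψ X (⊥_ D)).inv := by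
    rw [mu_prod_bot ψ nat, ← inl_alp ψ]
    simp
  haveI h1 : IsIso (coprod.inl : X ⨯ (⊥_ D) ⟶ (X ⨯ (⊥_ D)) ⨿ (X ⨯ (⊥_ D))) := by
    rw [hinl]; infer_instance
  have h2 : (coprod.inl : X ⨯ (⊥_ D) ⟶ (X ⨯ (⊥_ D)) ⨿ (X ⨯ (⊥_ D))) ≫
      coprod.desc (𝟙 _) (𝟙 _) = 𝟙 _ := by simp
  have h3 : coprod.desc (𝟙 (X ⨯ (⊥_ D))) (𝟙 (X ⨯ (⊥_ D))) ≫
      (coprod.inl : X ⨯ (⊥_ D) ⟶ (X ⨯ (⊥_ D)) ⨿ (X ⨯ (⊥_ D))) = 𝟙 _ := by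
    have h4 := IsIso.eq_inv_of_hom_inv_id h2
    rw [h4]
    simp
  have h5 : (coprod.inr : X ⨯ (⊥_ D) ⟶ (X ⨯ (⊥_ D)) ⨿ (X ⨯ (⊥_ D))) = coprod.inl := by
    calc (coprod.inr : X ⨯ (⊥_ D) ⟶ (X ⨯ (⊥_ D)) ⨿ (X ⨯ (⊥_ D)))
        = coprod.inr ≫ coprod.desc (𝟙 _) (𝟙 _) ≫ coprod.inl := by rw [h3, Category.comp_id]
      _ = coprod.inl := by simp
  calc u = coprod.inl ≫ coprod.desc u v := by simp
    _ = coprod.inr ≫ coprod.desc u v := by rw [h5]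
    _ = v := by simp

lemma ahat_iso (X Y : D) : IsIso (ahat ψ X Y) := by
  haveI : IsIso (coprod.inl : X ⨯ Y ⟶ (X ⨯ Y) ⨿ (X ⨯ ⊥_ D)) := by
    refine ⟨⟨coprod.desc (𝟙 _) (prod.map (𝟙 X) (initial.to Y)), by simp, ?_⟩⟩
    apply coprod.hom_ext
    · simp
    · rw [← Category.assoc]
      simp only [coprod.inr_desc, Category.comp_id]
      exact prod_bot_hom_ext ψ nat _ _
  rw [← inl_alp ψ X Y]
  infer_instance

lemma bhat_iso (X Z : D) : IsIso (bhat ψ X Z) := by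
  haveI : IsIso (coprod.inr : X ⨯ Z ⟶ (X ⨯ ⊥_ D) ⨿ (X ⨯ Z)) := by
    refine ⟨⟨coprod.desc (prod.map (𝟙 X) (initial.to Z)) (𝟙 _), by simp, ?_⟩⟩
    apply coprod.hom_ext
    · rw [← Category.assoc]
      simp only [coprod.inl_desc, Category.comp_id]
      exact prod_bot_hom_ext ψ nat _ _
    · simp
  rw [← inr_bet ψ X Z]
  infer_instance

end
end Stmt8Aux

theorem stmt_8 {D : Type*} [Category D] [HasFiniteProducts D] [HasFiniteCoproducts D]
    (ψ : ∀ X Y Z : D, (X ⨯ Y) ⨿ (X ⨯ Z) ≅ X ⨯ (Y ⨿ Z))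
    (nat : ∀ {X X' Y Y' Z Z' : D} (f : X ⟶ X') (g : Y ⟶ Y') (h : Z ⟶ Z'),
      coprod.map (prod.map f g) (prod.map f h) ≫ (ψ X' Y' Z').hom =
        (ψ X Y Z).hom ≫ prod.map f (coprod.map g h)) :
    ∀ X Y Z : D, IsIso (coprod.desc (prod.map (𝟙 X) coprod.inl)
      (prod.map (𝟙 X) coprod.inr) : (X ⨯ Y) ⨿ (X ⨯ Z) ⟶ X ⨯ (Y ⨿ Z)) := by
  intro X Y Z
  haveI ha : IsIso (Stmt8Aux.ahat ψ X Y) := Stmt8Aux.ahat_iso ψ nat X Y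
  haveI hb : IsIso (Stmt8Aux.bhat ψ X Z) := Stmt8Aux.bhat_iso ψ nat X Z
  haveI hm : IsIso (coprod.map (Stmt8Aux.ahat ψ X Y) (Stmt8Aux.bhat ψ X Z)) := by
    infer_instance
  have hψ := Stmt8Aux.psi_eq ψ nat X Y Z
  have hd : (coprod.desc (prod.map (𝟙 X) coprod.inl)
      (prod.map (𝟙 X) coprod.inr) : (X ⨯ Y) ⨿ (X ⨯ Z) ⟶ X ⨯ (Y ⨿ Z))
      = inv (coprod.map (Stmt8Aux.ahat ψ X Y) (Stmt8Aux.bhat ψ X Z)) ≫ (ψ X Y Z).hom := by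
    rw [hψ, IsIso.inv_hom_id_assoc]
  rw [hd]
  infer_instance
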